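/- For all positive reals a, b: S(a,b) − A(a,b) ≤ (1/3)(S(a,b) − H(a,b)); equivalently (2S(a,b) + H(a,b))/3 ≤ A(a,b). -/

import Mathlib

noncomputable def meanA (a b : ℝ) : ℝ := (a + b) / 2
noncomputable def meanG (a b : ℝ) : ℝ := Real.sqrt (a * b)
noncomputable def meanH (a b : ℝ) : ℝ := 2 * a * b / (a + b)
noncomputable def meanN (a b : ℝ) : ℝ := (a + Real.sqrt (a * b) + b) / 3
noncomputable def meanC (a b : ℝ) : ℝ := (a ^ 2 + b ^ 2) / (a + b)
noncomputable def meanS (a b : ℝ) : ℝ := Real.sqrt ((a ^ 2 + b ^ 2) / 2)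
noncomputable def meanR (a b : ℝ) : ℝ := 2 * (a ^ 2 + a * b + b ^ 2) / (3 * (a + b))
noncomputable def triDelta (a b : ℝ) : ℝ := (a - b) ^ 2 / (a + b)
noncomputable def hellinger (a b : ℝ) : ℝ := (Real.sqrt a - Real.sqrt b) ^ 2 / 2

theorem stmt_7 (a b : ℝ) (ha : 0 < a) (hb : 0 < b) :
    meanS a b - meanA a b ≤ (1 / 3) * (meanS a b - meanH a b) := by
  have hab : 0 < a + b := by linarith
  have hc : (0:ℝ) ≤ (3*a^2 + 2*a*b + 3*b^2) / (4*(a+b)) := by positivity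
  have hS : meanS a b ≤ (3*a^2 + 2*a*b + 3*b^2) / (4*(a+b)) := by
    rw [meanS, show (3*a^2 + 2*a*b + 3*b^2) / (4*(a+b)) =
        Real.sqrt (((3*a^2 + 2*a*b + 3*b^2) / (4*(a+b)))^2) from
      (Real.sqrt_sq hc).symm]
    apply Real.sqrt_le_sqrt
    rw [div_pow, div_le_div_iff₀ (by norm_num) (by positivity)]
    nlinarith [sq_nonneg (a^2 + b^2 - 2*a*b), sq_nonneg (a-b), mul_pos ha hb]
  have hH : meanH a b = 2*a*b/(a+b) := by rw [meanH]
  rw [meanA, hH]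
  have key : (3*a^2 + 2*a*b + 3*b^2) / (4*(a+b)) = (3*((a+b)/2) - 2*a*b/(a+b)) / 2 := by
    field_simp; ring
  linarith [hS, key ▸ hS]
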